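/- Let n ≥ 2, a, b > 0 and fix B > 0. With G as above, lim_{t→∞} t·G(t,B) = −(a/b)(n−1)^{n/2−1} B^{n+1}. -/

import Mathlib

/-- `U(t,y) = a ((n-1)t² + y²)^((n-4)/2) ((n-1)t² + (n-2)ty + y²)`. -/
noncomputable def U (n : ℕ) (a : ℝ) (t y : ℝ) : ℝ :=
  a * (((n : ℝ) - 1) * t ^ 2 + y ^ 2) ^ (((n : ℝ) - 4) / 2)
    * (((n : ℝ) - 1) * t ^ 2 + ((n : ℝ) - 2) * t * y + y ^ 2)

/-- `V(t,y) = b ((n-1)y² + t²)^((n-4)/2) (t² + (n-2)ty + (n-1)y²) / (t y^(n-1))`. -/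
noncomputable def V (n : ℕ) (b : ℝ) (t y : ℝ) : ℝ :=
  b * (((n : ℝ) - 1) * y ^ 2 + t ^ 2) ^ (((n : ℝ) - 4) / 2)
    * (t ^ 2 + ((n : ℝ) - 2) * t * y + ((n : ℝ) - 1) * y ^ 2) / (t * y ^ (n - 1))

/-- `W(t,y) = (t² + y²)(a((n-1)t² + y²)^((n-4)/2) + b t ((n-1)y² + t²)^((n-4)/2)/y^(n+1))`. -/
noncomputable def W (n : ℕ) (a b : ℝ) (t y : ℝ) : ℝ :=
  (t ^ 2 + y ^ 2) * (a * (((n : ℝ) - 1) * t ^ 2 + y ^ 2) ^ (((n : ℝ) - 4) / 2)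
    + b * t * (((n : ℝ) - 1) * y ^ 2 + t ^ 2) ^ (((n : ℝ) - 4) / 2) / y ^ (n + 1))

/-- `G = -(U + V)/W`, the right-hand side of the ODE `F' = G(t, F)`. -/
noncomputable def G (n : ℕ) (a b : ℝ) (t y : ℝ) : ℝ :=
  -(U n a t y + V n b t y) / W n a b t y

/-- `lim_{t→∞} t G(t,B) = -(a/b)(n-1)^(n/2-1) B^(n+1)`. -/
theorem tG_limit_infty (n : ℕ) (hn : 2 ≤ n) (a b : ℝ) (ha : 0 < a) (hb : 0 < b)
    (B : ℝ) (hB : 0 < B) :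
    Filter.Tendsto (fun t : ℝ => t * G n a b t B) Filter.atTop
      (nhds (-(a / b) * ((n : ℝ) - 1) ^ ((n : ℝ) / 2 - 1) * B ^ (n + 1))) := by
  have hn1 : (0:ℝ) < (n:ℝ) - 1 := by
    have h2 : (2:ℝ) ≤ (n:ℝ) := by exact_mod_cast hn
    linarith
  set r : ℝ := ((n:ℝ) - 4) / 2 with hr
  set P : ℝ := B ^ (n - 1) with hP
  set Q : ℝ := B ^ (n + 1) with hQ
  have hPpos : 0 < P := pow_pos hB _
  have hQpos : 0 < Q := pow_pos hB _
  set F : ℝ → ℝ := fun s =>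
    -(a * (((n:ℝ)-1) + s^2*B^2) ^ r * (((n:ℝ)-1) + ((n:ℝ)-2)*s*B + s^2*B^2)
      + b * s * (((n:ℝ)-1)*s^2*B^2 + 1) ^ r * (1 + ((n:ℝ)-2)*s*B + ((n:ℝ)-1)*s^2*B^2) / P)
    / ((1 + s^2*B^2) * (a * s * (((n:ℝ)-1) + s^2*B^2) ^ r
      + b * (((n:ℝ)-1)*s^2*B^2 + 1) ^ r / Q)) with hFdef
  -- continuity of F at 0
  have hc1cont : ContinuousAt (fun s : ℝ => (((n:ℝ)-1) + s^2*B^2) ^ r) 0 := by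
    apply ContinuousAt.rpow_const (by fun_prop)
    left
    simpa using hn1.ne'
  have hc2cont : ContinuousAt (fun s : ℝ => (((n:ℝ)-1)*s^2*B^2 + 1) ^ r) 0 := by
    apply ContinuousAt.rpow_const (by fun_prop)
    left
    norm_num
  have hcont : ContinuousAt F 0 := by
    apply ContinuousAt.div
    · apply ContinuousAt.neg
      apply ContinuousAt.add
      · exact ((continuousAt_const.mul hc1cont).mul (by fun_prop))
      · exact ((((continuousAt_const.mul continuousAt_id).mul hc2cont).mul (by fun_prop)).div_const P)
    · apply ContinuousAt.mul (by fun_prop)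
      apply ContinuousAt.add
      · exact (continuousAt_const.mul continuousAt_id).mul hc1cont
      · exact (continuousAt_const.mul hc2cont).div_const Q
    · have e : ((1 + (0:ℝ)^2*B^2) * (a * 0 * (((n:ℝ)-1) + (0:ℝ)^2*B^2) ^ r
          + b * (((n:ℝ)-1)*(0:ℝ)^2*B^2 + 1) ^ r / Q)) = b / Q := by
        rw [show ((n:ℝ)-1)*(0:ℝ)^2*B^2 + 1 = 1 by ring, Real.one_rpow]
        ring
      show ((1 + (0:ℝ)^2*B^2) * (a * 0 * (((n:ℝ)-1) + (0:ℝ)^2*B^2) ^ r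
          + b * (((n:ℝ)-1)*(0:ℝ)^2*B^2 + 1) ^ r / Q)) ≠ 0
      rw [e]
      exact (div_pos hb hQpos).ne'
  -- value of F at 0
  have hF0 : F 0 = -(a / b) * ((n:ℝ)-1) ^ ((n:ℝ)/2 - 1) * Q := by
    have h1 : ((n:ℝ)-1) ^ ((n:ℝ)/2 - 1) = ((n:ℝ)-1) ^ r * ((n:ℝ)-1) := by
      rw [← Real.rpow_add_one hn1.ne' r]
      congr 1
      rw [hr]; ring
    have e0 : F 0 = -(a * ((n:ℝ)-1) ^ r * ((n:ℝ)-1)) / (b / Q) := by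
      simp only [hFdef]
      rw [show ((n:ℝ)-1) + (0:ℝ)^2*B^2 = (n:ℝ)-1 by ring,
          show ((n:ℝ)-1)*(0:ℝ)^2*B^2 + 1 = 1 by ring, Real.one_rpow]
      congr 1 <;> ring
    rw [e0, h1]
    rw [div_eq_iff (div_pos hb hQpos).ne']
    field_simp
  -- eventual equality
  have heq : ∀ᶠ t in Filter.atTop, t * G n a b t B = F (1/t) := by
    filter_upwards [Filter.eventually_gt_atTop (0:ℝ)] with t ht
    have ht0 : t ≠ 0 := ht.ne'
    have hpos1 : (0:ℝ) < ((n:ℝ)-1) + (1/t)^2*B^2 := by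
      have : (0:ℝ) ≤ (1/t)^2*B^2 := by positivity
      linarith
    have hpos2 : (0:ℝ) < ((n:ℝ)-1)*(1/t)^2*B^2 + 1 := by
      have : (0:ℝ) ≤ ((n:ℝ)-1)*((1/t)^2*B^2) := mul_nonneg hn1.le (by positivity)
      nlinarith
    have hA : (((n:ℝ)-1)*t^2 + B^2) ^ r
        = t ^ ((n:ℝ)-4) * (((n:ℝ)-1) + (1/t)^2*B^2) ^ r := by
      have hb1 : ((n:ℝ)-1)*t^2 + B^2 = t^2 * (((n:ℝ)-1) + (1/t)^2*B^2) := by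
        field_simp
      have h2r : t ^ (((2:ℕ):ℝ) * r) = t ^ ((n:ℝ) - 4) := by
        congr 1
        push_cast
        rw [hr]; ring
      rw [hb1, Real.mul_rpow (sq_nonneg t) hpos1.le,
        ← Real.rpow_natCast t 2, ← Real.rpow_mul ht.le, h2r]
    have hB2 : (((n:ℝ)-1)*B^2 + t^2) ^ r
        = t ^ ((n:ℝ)-4) * (((n:ℝ)-1)*(1/t)^2*B^2 + 1) ^ r := by
      have hb1 : ((n:ℝ)-1)*B^2 + t^2 = t^2 * (((n:ℝ)-1)*(1/t)^2*B^2 + 1) := by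
        field_simp
      have h2r : t ^ (((2:ℕ):ℝ) * r) = t ^ ((n:ℝ) - 4) := by
        congr 1
        push_cast
        rw [hr]; ring
      rw [hb1, Real.mul_rpow (sq_nonneg t) hpos2.le,
        ← Real.rpow_natCast t 2, ← Real.rpow_mul ht.le, h2r]
    have hTpos : (0:ℝ) < t ^ ((n:ℝ)-4) := Real.rpow_pos_of_pos ht _
    have hc1pos : (0:ℝ) < (((n:ℝ)-1) + (1/t)^2*B^2) ^ r := Real.rpow_pos_of_pos hpos1 r
    have hc2pos : (0:ℝ) < (((n:ℝ)-1)*(1/t)^2*B^2 + 1) ^ r := Real.rpow_pos_of_pos hpos2 r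
    simp only [G, U, V, W, hFdef]
    rw [← hr, ← hP, ← hQ, hA, hB2]
    set T := t ^ ((n:ℝ)-4) with hT
    set c1 := (((n:ℝ)-1) + (1/t)^2*B^2) ^ r with hc1
    set c2 := (((n:ℝ)-1)*(1/t)^2*B^2 + 1) ^ r with hc2
    have hWpos : (0:ℝ) < (t^2 + B^2) * (a * (T * c1) + b * t * (T * c2) / Q) := by
      apply mul_pos (by positivity)
      have h1 : (0:ℝ) < a * (T * c1) := mul_pos ha (mul_pos hTpos hc1pos)
      have h2 : (0:ℝ) < b * t * (T * c2) / Q :=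
        div_pos (mul_pos (mul_pos hb ht) (mul_pos hTpos hc2pos)) hQpos
      linarith
    have hDpos : (0:ℝ) < (1 + (1/t)^2*B^2) * (a * (1/t) * c1 + b * c2 / Q) := by
      apply mul_pos (by positivity)
      have h1 : (0:ℝ) < a * (1/t) * c1 := mul_pos (mul_pos ha (by positivity)) hc1pos
      have h2 : (0:ℝ) < b * c2 / Q := div_pos (mul_pos hb hc2pos) hQpos
      linarith
    field_simp
  -- conclusion
  have hinv : Filter.Tendsto (fun t : ℝ => 1/t) Filter.atTop (nhds 0) := by
    simpa [one_div] using tendsto_inv_atTop_zero (𝕜 := ℝ)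
  have hmain : Filter.Tendsto (fun t : ℝ => F (1/t)) Filter.atTop (nhds (F 0)) :=
    (hcont.tendsto).comp hinv
  rw [show -(a / b) * ((n:ℝ)-1) ^ ((n:ℝ)/2 - 1) * Q = F 0 from hF0.symm]
  exact Filter.Tendsto.congr' (Filter.EventuallyEq.symm heq) hmain
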